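/- Let τ > 0 be an irrational real number and suppose there exist δ > 0 and 0 < ε < 1 such that for all integers s and positive integers q, |τ − s/q| ≥ δ/q^{2+ε}. Then there exists N > 0 such that for all positive integers k, |sin(πkτ)| ≥ N/k^{1+ε}. -/

import Mathlib

open Real

theorem stmt7 (τ : ℝ) (hpos : 0 < τ) (hirr : Irrational τ) (δ ε : ℝ)
    (hδ : 0 < δ) (hε0 : 0 < ε) (hε1 : ε < 1)
    (hdio : ∀ s : ℤ, ∀ q : ℕ, 0 < q → δ / (q : ℝ) ^ (2 + ε) ≤ |τ - (s : ℝ) / q|) :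
    ∃ N > (0 : ℝ), ∀ k : ℕ, 0 < k → N / (k : ℝ) ^ (1 + ε) ≤ |Real.sin (π * k * τ)| := by
  refine ⟨2 * δ, by linarith, fun k hk => ?_⟩
  have hk0 : (0 : ℝ) < k := Nat.cast_pos.mpr hk
  set s : ℤ := round ((k : ℝ) * τ) with hs
  set t : ℝ := (k : ℝ) * τ - s with htd
  have ht : |t| ≤ 1 / 2 := abs_sub_round _
  have hpow : (0 : ℝ) < (k : ℝ) ^ (1 + ε) := Real.rpow_pos_of_pos hk0 _
  have hkpow : (k : ℝ) ^ (2 + ε) = k * (k : ℝ) ^ (1 + ε) := by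
    rw [show (2 : ℝ) + ε = 1 + (1 + ε) by ring, Real.rpow_add hk0, Real.rpow_one]
  have h1 : δ / (k : ℝ) ^ (1 + ε) ≤ |t| := by
    have habs : |t| = k * |τ - (s : ℝ) / k| := by
      rw [← abs_of_pos hk0, ← abs_mul]
      congr 1
      field_simp [htd]
      rw [abs_of_pos hk0, htd]; ring
    rw [habs]
    calc δ / (k : ℝ) ^ (1 + ε) = k * (δ / (k : ℝ) ^ (2 + ε)) := by
          rw [hkpow]; field_simp
      _ ≤ k * |τ - (s : ℝ) / k| := by
          gcongr
          exact hdio s k hk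
  have hsin : |Real.sin (π * k * τ)| = Real.sin (π * |t|) := by
    have h2 : π * k * τ = π * t + s * π := by rw [htd]; ring
    rw [h2, Real.sin_add_int_mul_pi, abs_mul]
    have hone : |((-1 : ℝ)) ^ s| = 1 := by
      rcases Int.even_or_odd s with he | ho
      · rw [he.neg_one_zpow]; simp
      · rw [Odd.neg_one_zpow ho]; simp
    rw [hone, one_mul]
    have h3 : |Real.sin (π * t)| = |Real.sin (π * |t|)| := by
      rcases abs_cases t with ⟨h, _⟩ | ⟨h, _⟩
      · rw [h]
      · rw [h, mul_neg, Real.sin_neg, abs_neg]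
    rw [h3, abs_of_nonneg]
    apply Real.sin_nonneg_of_nonneg_of_le_pi
    · positivity
    · nlinarith [abs_nonneg t, pi_pos]
  rw [hsin]
  have h4 : π * |t| ≤ π / 2 := by nlinarith [pi_pos]
  have h5 : 2 / π * (π * |t|) ≤ Real.sin (π * |t|) :=
    Real.mul_le_sin (by positivity) h4
  have h6 : 2 / π * (π * |t|) = 2 * |t| := by field_simp
  calc 2 * δ / (k : ℝ) ^ (1 + ε) = 2 * (δ / (k : ℝ) ^ (1 + ε)) := by ring
    _ ≤ 2 * |t| := by linarith
    _ ≤ Real.sin (π * |t|) := by linarith [h5, h6.symm.le]
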